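/- arXiv:1708.08832 — 3 statements merged into one kernel-verified Lean document; each statement's English description precedes it below -/
import Mathlib

section
/- Let d = 1, c > 0, u, v, w ∈ ℝ, and define φ(x) = |x - u| + |x - v| + c·(x - w)². Set u' = min{u,v}, v' = max{u,v}, and α = min{|w - (u+v)/2|, 1/c}. Then a global minimizer of φ over ℝ is given by: x* = w if w ∈ [u', v']; x* = max{v', w - α} if w > v'; and x* = min{u', w + α} if w < u'. -/
/-- Optimality on the right side: if `xs` lies in `[max u v, w]`, satisfies
`c * (w - xs) ≤ 1`, and either `xs = max u v` or `c * (w - xs) = 1`, then `xs`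
is a global minimizer of `|x-u| + |x-v| + c*(x-w)^2`. -/
lemma side_min (c u v w xs : ℝ) (hc : 0 < c)
    (hmax : max u v ≤ xs) (hw : xs ≤ w) (hgrad : c * (w - xs) ≤ 1)
    (hor : xs = max u v ∨ c * (w - xs) = 1) :
    ∀ x : ℝ, |xs - u| + |xs - v| + c * (xs - w) ^ 2
      ≤ |x - u| + |x - v| + c * (x - w) ^ 2 := by
  intro x
  have hu : u ≤ xs := le_trans (le_max_left u v) hmax
  have hv : v ≤ xs := le_trans (le_max_right u v) hmax
  have habs : |xs - u| + |xs - v| = 2 * xs - u - v := by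
    rw [abs_of_nonneg (by linarith), abs_of_nonneg (by linarith)]; ring
  rw [habs]
  rcases le_or_gt x (max u v) with hxle | hxgt
  · -- x ≤ max u v ≤ xs ≤ w
    have hxu : |x - u| ≥ u - x := by
      have := abs_sub_comm x u ▸ le_abs_self (u - x); linarith [le_abs_self (x - u), neg_abs_le (x - u)]
    have hxv : |x - v| ≥ v - x := by linarith [neg_abs_le (x - v)]
    have hxu' : |x - u| ≥ x - u := le_abs_self _
    have hxv' : |x - v| ≥ x - v := le_abs_self _
    -- |x-u| + |x-v| ≥ 2 * max u v - u - v
    have hkey : |x - u| + |x - v| ≥ 2 * max u v - u - v := by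
      rcases max_cases u v with ⟨h1, h2⟩ | ⟨h1, h2⟩
      · linarith [neg_abs_le (x - u)]
      · linarith [neg_abs_le (x - v)]
    have hxs : x ≤ xs := le_trans hxle hmax
    rcases hor with h | h
    · -- xs = max u v : quadratic gain is nonneg since w - x ≥ w - xs ≥ 0
      have hq : c * (x - w) ^ 2 ≥ c * (xs - w) ^ 2 := by
        have h1 : 0 ≤ w - xs := by linarith
        have h2 : xs - x ≥ 0 := by linarith
        nlinarith [mul_nonneg hc.le (mul_nonneg h2 (show (0:ℝ) ≤ 2*w - x - xs by linarith))]
      rw [h]; rw [h] at hq; linarith [hkey, hq]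
    · -- c (w - xs) = 1
      have h1 : 0 ≤ w - xs := by linarith
      have h2 : 0 ≤ xs - x := by linarith
      have h3 : 0 ≤ xs - max u v := by linarith
      nlinarith [hkey, mul_nonneg h2 h1, mul_nonneg (mul_nonneg hc.le h2) h2]
  · -- x > max u v
    have hxu : x - u > 0 := lt_of_lt_of_le (by linarith [le_max_left u v]) (le_refl _)
    have habs2 : |x - u| + |x - v| = 2 * x - u - v := by
      rw [abs_of_pos (by linarith [le_max_left u v, hxgt]),
          abs_of_pos (by linarith [le_max_right u v, hxgt])]; ring
    rw [habs2]
    -- need 2*(x - xs) + c*((x-w)^2 - (xs-w)^2) ≥ 0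
    rcases le_or_gt xs x with hge | hlt
    · have h1 : 0 ≤ x - xs := by linarith
      nlinarith [mul_nonneg (mul_nonneg hc.le h1) h1, mul_nonneg h1 (by linarith : (0:ℝ) ≤ 2 - 2 * (c * (w - xs)))]
    · rcases hor with h | h
      · exfalso; linarith [h ▸ hlt]
      · have h1 : 0 ≤ xs - x := by linarith
        nlinarith [mul_nonneg (mul_nonneg hc.le h1) h1]

theorem stmt_1 (c u v w : ℝ) (hc : 0 < c)
    (φ : ℝ → ℝ) (hφ : ∀ x, φ x = |x - u| + |x - v| + c * (x - w) ^ 2)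
    (u' v' α : ℝ) (hu' : u' = min u v) (hv' : v' = max u v)
    (hα : α = min |w - (u + v) / 2| (1 / c))
    (xstar : ℝ)
    (hx : xstar = if w ∈ Set.Icc u' v' then w
          else if w > v' then max v' (w - α) else min u' (w + α)) :
    ∀ x : ℝ, φ xstar ≤ φ x := by
  intro x
  rw [hφ, hφ]
  have hαnn : 0 ≤ α := by
    rw [hα]; exact le_min (abs_nonneg _) (by positivity)
  have hα1c : α ≤ 1 / c := hα ▸ min_le_right _ _
  have hmge : (u + v) / 2 ≤ max u v := by
    rcases le_total u v with h | h <;> simp [max_eq_right, max_eq_left, h] <;> linarith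
  have hmle : min u v ≤ (u + v) / 2 := by
    rcases le_total u v with h | h <;> simp [min_eq_left, min_eq_right, h] <;> linarith
  by_cases h1 : w ∈ Set.Icc u' v'
  · -- case 1: xstar = w
    rw [hx, if_pos h1]
    obtain ⟨hl, hr⟩ := h1
    rw [hu'] at hl; rw [hv'] at hr
    have h2 : |w - u| + |w - v| = max u v - min u v := by
      rcases le_total u v with h | h
      · rw [min_eq_left h, max_eq_right h] at *
        rw [abs_of_nonneg (by linarith), abs_of_nonpos (by linarith)]; ring
      · rw [min_eq_right h, max_eq_left h] at *
        rw [abs_of_nonpos (by linarith), abs_of_nonneg (by linarith)]; ring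
    have h3 : |x - u| + |x - v| ≥ max u v - min u v := by
      rcases le_total u v with h | h
      · rw [min_eq_left h, max_eq_right h]
        linarith [le_abs_self (x - u), neg_abs_le (x - v)]
      · rw [min_eq_right h, max_eq_left h]
        linarith [le_abs_self (x - v), neg_abs_le (x - u)]
    nlinarith [sq_nonneg (x - w), mul_nonneg hc.le (sq_nonneg (x - w))]
  · rw [hx, if_neg h1]
    by_cases h2 : w > v'
    · rw [if_pos h2]
      rw [hv'] at h2
      -- xstar = max v' (w - α)
      set xs := max v' (w - α) with hxs
      have hxsw : xs ≤ w := by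
        apply max_le <;> [skip; linarith]
        rw [hv']; linarith
      have hxsmax : max u v ≤ xs := hv' ▸ le_max_left _ _
      have hwm : |w - (u + v) / 2| = w - (u + v) / 2 := abs_of_nonneg (by linarith)
      have hgrad : c * (w - xs) ≤ 1 := by
        have : w - α ≤ xs := le_max_right _ _
        have h4 : w - xs ≤ α := by linarith
        calc c * (w - xs) ≤ c * (1 / c) := by
              apply mul_le_mul_of_nonneg_left (le_trans h4 hα1c) hc.le
          _ = 1 := by field_simp
      have hor : xs = max u v ∨ c * (w - xs) = 1 := by
        rcases le_or_gt (w - α) v' with h | h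
        · left; rw [hxs, max_eq_left h, hv']
        · right
          have hxs' : xs = w - α := by rw [hxs, max_eq_right h.le]
          rw [hv'] at h
          have hαlt : α < |w - (u + v) / 2| := by
            rw [hwm]; linarith [hmge]
          have hα1 : α = 1 / c := by
            rcases le_or_gt (1 / c) |w - (u + v) / 2| with hh | hh
            · rw [hα, min_eq_right hh]
            · exfalso; rw [hα, min_eq_left hh.le] at hαlt; exact lt_irrefl _ hαlt
          rw [hxs', hα1]; field_simp; ring
      exact side_min c u v w xs hc hxsmax hxsw hgrad hor x
    · rw [if_neg h2]
      -- w < u' ; mirror case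
      have h2' : w < u' := by
        rcases lt_trichotomy w u' with h | h | h
        · exact h
        · exfalso; apply h1; constructor
          · exact h.ge
          · push_neg at h2; rw [hu', hv'] at *; linarith [min_le_max (a := u) (b := v)]
        · exfalso; apply h1; constructor
          · exact h.le
          · push_neg at h2; exact h2
      rw [hu'] at h2'
      set xs := min u' (w + α) with hxs
      have hxsw : w ≤ xs := by
        apply le_min <;> [skip; linarith]
        rw [hu']; linarith
      have hxsmin : xs ≤ min u v := hu' ▸ min_le_left _ _
      have hwm : |w - (u + v) / 2| = (u + v) / 2 - w := by
        rw [abs_of_nonpos (by linarith)]; ring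
      have hgrad : c * ((-w) - (-xs)) ≤ 1 := by
        have : xs ≤ w + α := min_le_right _ _
        have h4 : xs - w ≤ α := by linarith
        have : c * (xs - w) ≤ c * (1 / c) :=
          mul_le_mul_of_nonneg_left (le_trans h4 hα1c) hc.le
        have hcc : c * (1 / c) = 1 := by field_simp
        calc c * ((-w) - (-xs)) = c * (xs - w) := by ring
          _ ≤ 1 := by linarith
      have hor : (-xs) = max (-u) (-v) ∨ c * ((-w) - (-xs)) = 1 := by
        have hmaxneg : max (-u) (-v) = -(min u v) := by
          rcases le_total u v with h | h <;>
            simp [min_eq_left, min_eq_right, max_eq_left, max_eq_right, h, neg_le_neg h]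
        rcases le_or_gt u' (w + α) with h | h
        · left; rw [hmaxneg, hxs, min_eq_left h, hu']
        · right
          have hxs' : xs = w + α := by rw [hxs, min_eq_right h.le]
          rw [hu'] at h
          have hαlt : α < |w - (u + v) / 2| := by
            rw [hwm]; linarith [hmle]
          have hα1 : α = 1 / c := by
            rcases le_or_gt (1 / c) |w - (u + v) / 2| with hh | hh
            · rw [hα, min_eq_right hh]
            · exfalso; rw [hα, min_eq_left hh.le] at hαlt; exact lt_irrefl _ hαlt
          rw [hxs', hα1]; field_simp; ring
      have hxsmax : max (-u) (-v) ≤ -xs := by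
        have hmaxneg : max (-u) (-v) = -(min u v) := by
          rcases le_total u v with h | h <;>
            simp [min_eq_left, min_eq_right, max_eq_left, max_eq_right, h, neg_le_neg h]
        rw [hmaxneg]; exact neg_le_neg hxsmin
      have key := side_min c (-u) (-v) (-w) (-xs) hc hxsmax (by linarith) hgrad hor (-x)
      have e1 : ∀ a b : ℝ, |(-a) - (-b)| = |a - b| := by
        intro a b; rw [show (-a) - (-b) = -(a - b) by ring, abs_neg]
      rw [e1, e1, e1, e1, show ((-xs) - (-w))^2 = (xs - w)^2 by ring,
          show ((-x) - (-w))^2 = (x - w)^2 by ring] at key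
      exact key
end

section
/- Let g : [0, ∞) → ℝ be monotonically non-decreasing, let A ⊆ ℝ be a measurable set of finite Lebesgue measure, and let x ∈ ℝ. Let B be the origin-centered interval with the same Lebesgue measure as A, i.e., B = [-μ(A)/2, μ(A)/2]. Then ∫_A g(|x - q|) dq ≥ ∫_B g(|q|) dq. -/
open MeasureTheory

theorem stmt_5 (g : ℝ → ℝ) (hg : MonotoneOn g (Set.Ici 0))
    (A : Set ℝ) (hA : MeasurableSet A) (hAfin : volume A < ⊤) (x : ℝ)
    (hint : IntegrableOn (fun q => g |x - q|) A volume)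
    (B : Set ℝ) (hB : B = Set.Icc (-(volume A).toReal / 2) ((volume A).toReal / 2)) :
    ∫ q in B, g |q| ≤ ∫ q in A, g |x - q| := by
  -- G measurable version
  set G : ℝ → ℝ := fun t => g (max t 0) with hG
  have hGmono : Monotone G := fun a b hab =>
    hg (Set.mem_Ici.2 (le_max_right _ _)) (Set.mem_Ici.2 (le_max_right _ _))
      (max_le_max hab le_rfl)
  have hGabs : ∀ q : ℝ, G |q| = g |q| := fun q => by
    simp [hG, max_eq_left (abs_nonneg q)]
  set m := (volume A).toReal with hm
  have hm0 : 0 ≤ m := ENNReal.toReal_nonneg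
  -- substitute q ↦ x - q
  have mp : MeasurePreserving (fun t : ℝ => x - t) volume volume :=
    Measure.measurePreserving_sub_left volume x
  have emb : MeasurableEmbedding (fun t : ℝ => x - t) :=
    (MeasurableEquiv.subLeft x).measurableEmbedding
  set A' : Set ℝ := (fun t : ℝ => x - t) ⁻¹' A with hA'
  have hA'm : MeasurableSet A' := hA.preimage mp.measurable
  have hA'vol : volume A' = volume A := mp.measure_preimage hA.nullMeasurableSet
  have hpre : (fun t : ℝ => x - t) ⁻¹' A' = A := by
    ext t; simp [hA']
  have hsub : ∫ q in A, g |x - q| = ∫ q in A', g |q| := by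
    have := mp.setIntegral_preimage_emb emb (fun q => g |q|) A'
    rw [hpre] at this
    exact this
  have hint' : IntegrableOn (fun q => g |q|) A' volume := by
    rw [← (mp.integrableOn_comp_preimage emb (s := A')), hpre]
    exact hint
  rw [hsub]
  -- now compare B and A'
  have hBm : MeasurableSet B := by rw [hB]; exact measurableSet_Icc
  have hBvol : volume B = volume A := by
    rw [hB, Real.volume_Icc]
    rw [show (volume A).toReal / 2 - -(volume A).toReal / 2 = m by rw [hm]; ring]
    exact ENNReal.ofReal_toReal hAfin.ne
  have hA'fin : volume A' < ⊤ := hA'vol ▸ hAfin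
  have hBfin : volume B < ⊤ := hBvol ▸ hAfin
  -- integrability on B
  have hmeas : Measurable fun q : ℝ => g |q| := by
    have : (fun q : ℝ => g |q|) = fun q => G |q| := by
      funext q; rw [hGabs]
    rw [this]
    exact hGmono.measurable.comp measurable_abs
  have hintB : IntegrableOn (fun q => g |q|) B volume := by
    apply Measure.integrableOn_of_bounded (M := max |g 0| |g (m/2)|) hBfin.ne
      hmeas.aestronglyMeasurable
    filter_upwards [ae_restrict_mem hBm] with q hq
    rw [hB] at hq
    have h1 : |q| ≤ m / 2 := abs_le.2 ⟨by linarith [hq.1], hq.2⟩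
    have h2 : g 0 ≤ g |q| := hg (Set.mem_Ici.2 le_rfl) (Set.mem_Ici.2 (abs_nonneg q)) (abs_nonneg q)
    have h3 : g |q| ≤ g (m / 2) := hg (Set.mem_Ici.2 (abs_nonneg q)) (Set.mem_Ici.2 (by positivity)) h1
    rw [Real.norm_eq_abs, abs_le]
    constructor
    · calc -(max |g 0| |g (m/2)|) ≤ -|g 0| := by simp [le_max_left]
        _ ≤ g 0 := neg_abs_le _
        _ ≤ g |q| := h2
    · calc g |q| ≤ g (m/2) := h3
        _ ≤ |g (m/2)| := le_abs_self _
        _ ≤ max |g 0| |g (m/2)| := le_max_right _ _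
  -- split
  have hdiffAB : MeasurableSet (A' \ B) := hA'm.diff hBm
  have hdiffBA : MeasurableSet (B \ A') := hBm.diff hA'm
  have hinterm : MeasurableSet (A' ∩ B) := hA'm.inter hBm
  have hvol_eq : volume (A' \ B) = volume (B \ A') := by
    have h1 : volume (A' \ B) + volume (A' ∩ B) = volume A' := by
      rw [add_comm, measure_inter_add_diff _ hBm]
    have h2 : volume (B \ A') + volume (A' ∩ B) = volume B := by
      rw [add_comm, Set.inter_comm, measure_inter_add_diff _ hA'm]
    have hfin : volume (A' ∩ B) ≠ ⊤ :=
      ((measure_mono Set.inter_subset_right).trans_lt hBfin).ne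
    have : volume (A' \ B) + volume (A' ∩ B) = volume (B \ A') + volume (A' ∩ B) := by
      rw [h1, h2, hA'vol, hBvol]
    exact WithTop.add_right_cancel hfin this
  have hsplitA : ∫ q in A', g |q| = (∫ q in A' ∩ B, g |q|) + ∫ q in A' \ B, g |q| := by
    rw [← integral_inter_add_diff hBm hint']
  have hsplitB : ∫ q in B, g |q| = (∫ q in A' ∩ B, g |q|) + ∫ q in B \ A', g |q| := by
    rw [← integral_inter_add_diff hA'm hintB, Set.inter_comm]
  rw [hsplitA, hsplitB]
  gcongr ?_ + ?_
  · exact le_rfl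
  · -- ∫ B\A' ≤ g(m/2) * vol ≤ ∫ A'\B
    have hc1 : ∫ q in B \ A', g |q| ≤ g (m/2) * (volume (B \ A')).toReal := by
      have : ∫ q in B \ A', g |q| ≤ ∫ _ in B \ A', g (m/2) := by
        apply setIntegral_mono_on (hintB.mono_set Set.diff_subset)
          (integrableOn_const ((measure_mono Set.diff_subset).trans_lt hBfin).ne)
          hdiffBA
        intro q hq
        have hq' := hq.1
        rw [hB] at hq'
        exact hg (Set.mem_Ici.2 (abs_nonneg q)) (Set.mem_Ici.2 (by positivity))
          (abs_le.2 ⟨by linarith [hq'.1], hq'.2⟩)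
      simpa [mul_comm, Measure.real] using this
    have hc2 : g (m/2) * (volume (A' \ B)).toReal ≤ ∫ q in A' \ B, g |q| := by
      apply setIntegral_ge_of_const_le_real hdiffAB
        ((measure_mono Set.diff_subset).trans_lt hA'fin).ne
      · intro q hq
        apply hg (Set.mem_Ici.2 (by positivity)) (Set.mem_Ici.2 (abs_nonneg q))
        by_contra h
        push_neg at h
        exact hq.2 (by rw [hB]; exact abs_le.1 h.le |> fun ⟨h1, h2⟩ =>
          ⟨by linarith, h2⟩)
      · exact hint'.mono_set Set.diff_subset
    calc ∫ q in B \ A', g |q| ≤ g (m/2) * (volume (B \ A')).toReal := hc1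
      _ = g (m/2) * (volume (A' \ B)).toReal := by rw [hvol_eq]
      _ ≤ ∫ q in A' \ B, g |q| := hc2
end

section
/- Let h ≥ 0, r > 0, and n ≥ 1. For the uniform density f(q) = 1 on [0,1], the uniform placement x_i = (2i-1)/(2n), i = 1,…,n, minimizes P(x) = ∫₀¹ min_i (|x_i - q|² + h²)^{r/2} dq over all placements x ∈ ℝⁿ, and the minimum value equals 2n·∫₀^{1/(2n)} (u² + h²)^{r/2} du. -/
open MeasureTheory Set Finset

section Aux
variable {h r : ℝ} {n : ℕ}

noncomputable def gg (h r u : ℝ) : ℝ := (u ^ 2 + h ^ 2) ^ (r / 2)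

lemma gg_cont (hr : 0 ≤ r) : Continuous (gg h r) := by
  apply Continuous.rpow_const (by continuity)
  intro x; right; positivity

lemma gg_nonneg (u : ℝ) : 0 ≤ gg h r u := Real.rpow_nonneg (by positivity) _

lemma gg_mono (hr : 0 ≤ r) {u v : ℝ} (huv : u ^ 2 ≤ v ^ 2) : gg h r u ≤ gg h r v :=
  Real.rpow_le_rpow (by positivity) (by linarith) (by linarith)

lemma iInf_eq_inf' (hn : 1 ≤ n) (f : Fin n → ℝ) :
    (⨅ i, f i) = Finset.univ.inf'
      (Finset.univ_nonempty_iff.mpr (Fin.pos_iff_nonempty.mp hn)) f := by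
  haveI : Nonempty (Fin n) := Fin.pos_iff_nonempty.mp hn
  exact (Finset.inf'_univ_eq_ciInf f).symm

lemma cont_iInf (hn : 1 ≤ n) (f : Fin n → ℝ → ℝ) (hf : ∀ i, Continuous (f i)) :
    Continuous (fun q => ⨅ i, f i q) := by
  have hne : (Finset.univ : Finset (Fin n)).Nonempty := by
    exact Finset.univ_nonempty_iff.mpr (Fin.pos_iff_nonempty.mp hn)
  have : (fun q => ⨅ i, f i q) = fun q => Finset.univ.inf' hne (fun i => f i q) := by
    funext q; rw [iInf_eq_inf' hn]
  rw [this]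
  exact Continuous.finset_inf'_apply hne (fun i _ => hf i)

lemma cell_min (hr : 0 < r) (hn : 1 ≤ n) (xu : Fin n → ℝ)
    (hxu : ∀ i : Fin n, xu i = (2 * (i : ℝ) + 1) / (2 * n))
    (k : Fin n) {q : ℝ} (hq : q ∈ Icc ((k : ℝ) / n) (((k : ℝ) + 1) / n)) :
    (⨅ i, gg h r (xu i - q)) = gg h r (xu k - q) := by
  have hN : (0 : ℝ) < n := by exact_mod_cast hn
  have hN' : (n : ℝ) ≠ 0 := hN.ne'
  set c : ℝ := 1 / (2 * n) with hc
  have hc0 : 0 < c := by positivity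
  obtain ⟨hql, hqr⟩ := hq
  have h2 : ((k : ℝ)) / n = 2 * (k : ℝ) * c := by rw [hc]; field_simp
  have h3 : ((k : ℝ) + 1) / n = (2 * (k : ℝ) + 2) * c := by rw [hc]; field_simp
  have hxk : |xu k - q| ≤ c := by
    rw [abs_le]
    have h1 : xu k = (2 * (k : ℝ) + 1) * c := by rw [hxu, hc]; field_simp
    rw [h2] at hql; rw [h3] at hqr
    constructor <;> nlinarith
  have key : ∀ i : Fin n, |xu k - q| ≤ |xu i - q| := by
    intro i
    rcases lt_trichotomy ((i : ℕ)) ((k : ℕ)) with hik | hik | hik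
    · have hcast : (i : ℝ) + 1 ≤ (k : ℝ) := by exact_mod_cast hik
      have h1 : xu i = (2 * (i : ℝ) + 1) * c := by rw [hxu, hc]; field_simp
      have hle : xu i - q ≤ -c := by rw [h2] at hql; nlinarith
      calc |xu k - q| ≤ c := hxk
        _ ≤ -(xu i - q) := by linarith
        _ ≤ |xu i - q| := neg_le_abs _
    · have : i = k := Fin.ext hik
      rw [this]
    · have hcast : (k : ℝ) + 1 ≤ (i : ℝ) := by exact_mod_cast hik
      have h1 : xu i = (2 * (i : ℝ) + 1) * c := by rw [hxu, hc]; field_simp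
      have hle : c ≤ xu i - q := by rw [h3] at hqr; nlinarith
      calc |xu k - q| ≤ c := hxk
        _ ≤ xu i - q := hle
        _ ≤ |xu i - q| := le_abs_self _
  apply le_antisymm
  · exact ciInf_le (Finite.bddBelow_range _) k
  · haveI : Nonempty (Fin n) := Fin.pos_iff_nonempty.mp hn
    apply le_ciInf; intro i
    apply gg_mono hr.le
    have hk0 := abs_nonneg (xu k - q)
    calc (xu k - q) ^ 2 = |xu k - q| ^ 2 := (sq_abs _).symm
      _ ≤ |xu i - q| ^ 2 := by nlinarith [key i]
      _ = (xu i - q) ^ 2 := sq_abs _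

end Aux

section A
variable {h r : ℝ} {n : ℕ}

lemma rpow_inv_lt (hr : 0 < r) {B t : ℝ} (hB : 0 ≤ B) (ht : 0 ≤ t) :
    t < B ^ (r / 2) ↔ t ^ (2 / r) < B := by
  have hr' : r ≠ 0 := hr.ne'
  have hB2 : (B ^ (r / 2)) ^ (2 / r) = B := by
    rw [← Real.rpow_mul hB]
    rw [show (r / 2) * (2 / r) = 1 by field_simp]
    exact Real.rpow_one B
  have ht2 : (t ^ (2 / r)) ^ (r / 2) = t := by
    rw [← Real.rpow_mul ht]
    rw [show (2 / r) * (r / 2) = 1 by field_simp]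
    exact Real.rpow_one t
  constructor
  · intro hlt
    calc t ^ (2 / r) < (B ^ (r / 2)) ^ (2 / r) :=
          Real.rpow_lt_rpow ht hlt (by positivity)
      _ = B := hB2
  · intro hlt
    calc t = (t ^ (2 / r)) ^ (r / 2) := ht2.symm
      _ < B ^ (r / 2) := Real.rpow_lt_rpow (Real.rpow_nonneg ht _) hlt (by positivity)

lemma level_iff (hr : 0 < r) {t u : ℝ} (ht0 : 0 ≤ t) (ht : gg h r 0 ≤ t) (hu : 0 ≤ u) :
    t < gg h r u ↔ Real.sqrt (t ^ (2 / r) - h ^ 2) < u := by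
  have hgg : gg h r u = (u ^ 2 + h ^ 2) ^ (r / 2) := rfl
  have hch : h ^ 2 ≤ t ^ (2 / r) := by
    by_contra hcon
    push_neg at hcon
    have : t < gg h r 0 := by
      rw [show gg h r 0 = ((0:ℝ) ^ 2 + h ^ 2) ^ (r / 2) from rfl]
      rw [rpow_inv_lt hr (by positivity) ht0]
      simpa using hcon
    linarith
  rw [hgg, rpow_inv_lt hr (by positivity) ht0]
  have hd : 0 ≤ t ^ (2 / r) - h ^ 2 := by linarith
  constructor
  · intro hlt
    rcases hu.eq_or_lt with h0 | h0
    · exfalso; rw [← h0] at hlt; simp at hlt; linarith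
    · rw [Real.sqrt_lt' h0]; linarith
  · intro hlt
    rcases hu.eq_or_lt with h0 | h0
    · exfalso; rw [← h0] at hlt
      exact absurd hlt (not_lt.mpr (Real.sqrt_nonneg _))
    · rw [Real.sqrt_lt' h0] at hlt; linarith
end A

section B
variable {h r : ℝ} {n : ℕ}

lemma even_int (hr : 0 ≤ r) (c : ℝ) :
    (∫ x in (-c)..c, gg h r x) = 2 * ∫ x in (0:ℝ)..c, gg h r x := by
  have hgc : Continuous (gg h r) := gg_cont hr
  have hsplit := intervalIntegral.integral_add_adjacent_intervals
    (hgc.intervalIntegrable (μ := volume) (-c) 0) (hgc.intervalIntegrable (μ := volume) 0 c)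
  have hneg : (∫ x in (-c)..(0:ℝ), gg h r x) = ∫ x in (0:ℝ)..c, gg h r x := by
    have := intervalIntegral.integral_comp_neg (a := (0:ℝ)) (b := c) (fun x => gg h r x)
    simp only [neg_zero] at this
    rw [← this]
    congr 1; funext x; simp [gg]
  rw [← hsplit, hneg]; ring

lemma partB (hr : 0 < r) (hn : 1 ≤ n) (xu : Fin n → ℝ)
    (hxu : ∀ i : Fin n, xu i = (2 * (i : ℝ) + 1) / (2 * n)) :
    (∫ q in (0:ℝ)..1, ⨅ i, gg h r (xu i - q))
      = 2 * n * ∫ u in (0:ℝ)..(1 / (2 * n)), gg h r u := by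
  have hN : (0 : ℝ) < n := by exact_mod_cast hn
  have hN' : (n : ℝ) ≠ 0 := hN.ne'
  have hgc : Continuous (gg h r) := gg_cont hr.le
  have hfc : Continuous (fun q => ⨅ i, gg h r (xu i - q)) :=
    cont_iInf hn _ (fun i => hgc.comp (by continuity))
  set a : ℕ → ℝ := fun k => k / n with ha
  have hint : ∀ k < n, IntervalIntegrable (fun q => ⨅ i, gg h r (xu i - q))
      volume (a k) (a (k + 1)) := fun k _ => hfc.intervalIntegrable _ _
  have hsum := intervalIntegral.sum_integral_adjacent_intervals hint
  have ha0 : a 0 = 0 := by simp [ha]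
  have han : a n = 1 := by simp [ha, div_self hN']
  rw [ha0, han] at hsum
  rw [← hsum]
  have hpiece : ∀ k, k < n → (∫ q in a k..a (k + 1), ⨅ i, gg h r (xu i - q))
      = 2 * ∫ u in (0:ℝ)..(1 / (2 * n)), gg h r u := by
    intro k hk
    have hle : a k ≤ a (k + 1) := by
      rw [ha]; push_cast; gcongr; linarith
    have hcell : EqOn (fun q => ⨅ i, gg h r (xu i - q))
        (fun q => gg h r (xu ⟨k, hk⟩ - q)) (uIcc (a k) (a (k + 1))) := by
      intro q hq
      rw [uIcc_of_le hle] at hq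
      refine cell_min hr hn xu hxu ⟨k, hk⟩ ?_
      have h1 : ((⟨k, hk⟩ : Fin n) : ℝ) = (k : ℝ) := by norm_cast
      rw [h1]
      simp only [ha] at hq
      push_cast at hq
      exact hq
    rw [intervalIntegral.integral_congr hcell,
      intervalIntegral.integral_comp_sub_left (gg h r) (xu ⟨k, hk⟩)]
    have e1 : xu ⟨k, hk⟩ - a (k + 1) = -(1 / (2 * n)) := by
      rw [hxu, ha]; push_cast; field_simp; ring
    have e2 : xu ⟨k, hk⟩ - a k = 1 / (2 * n) := by
      rw [hxu, ha]; push_cast; field_simp; ring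
    rw [e1, e2, even_int hr.le]
  calc ∑ k ∈ Finset.range n, ∫ q in a k..a (k + 1), ⨅ i, gg h r (xu i - q)
      = ∑ k ∈ Finset.range n, 2 * ∫ u in (0:ℝ)..(1 / (2 * n)), gg h r u :=
        Finset.sum_congr rfl (fun k hk => hpiece k (Finset.mem_range.mp hk))
    _ = n * (2 * ∫ u in (0:ℝ)..(1 / (2 * n)), gg h r u) := by
        rw [Finset.sum_const, Finset.card_range, nsmul_eq_mul]
    _ = 2 * n * ∫ u in (0:ℝ)..(1 / (2 * n)), gg h r u := by ring

end B

section A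
variable {h r : ℝ} {n : ℕ}

lemma partA (hr : 0 < r) (hn : 1 ≤ n) (x : Fin n → ℝ) :
    2 * n * (∫ u in (0:ℝ)..(1 / (2 * n)), gg h r u)
      ≤ ∫ q in (0:ℝ)..1, ⨅ i, gg h r (x i - q) := by
  haveI : Nonempty (Fin n) := Fin.pos_iff_nonempty.mp hn
  have hN : (0 : ℝ) < n := by exact_mod_cast hn
  set a : ℝ := 1 / (2 * n) with ha
  have ha0 : 0 < a := by positivity
  have h2na : 2 * (n : ℝ) * a = 1 := by rw [ha]; field_simp
  set D : ℝ → ℝ := fun q => ⨅ i, |x i - q| with hD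
  have hDc : Continuous D := cont_iInf hn _ (fun i => by continuity)
  have hD0 : ∀ q, 0 ≤ D q := fun q => le_ciInf (fun i => abs_nonneg _)
  have hDmin : ∀ q, ∃ i, D q = |x i - q| := by
    intro q
    obtain ⟨i, _, hi⟩ := Finset.exists_mem_eq_inf' (Finset.univ_nonempty (α := Fin n))
      (fun i => |x i - q|)
    refine ⟨i, ?_⟩
    rw [hD]; simp only; rw [iInf_eq_inf' hn]; exact hi
  have hgc : Continuous (gg h r) := gg_cont hr.le
  have hgDc : Continuous (fun q => gg h r (D q)) := hgc.comp hDc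
  have hfc : Continuous (fun q => ⨅ i, gg h r (x i - q)) :=
    cont_iInf hn _ (fun i => hgc.comp (by continuity))
  have hpt : ∀ q, gg h r (D q) ≤ ⨅ i, gg h r (x i - q) := by
    intro q
    refine le_ciInf fun i => gg_mono hr.le ?_
    have h1 : D q ≤ |x i - q| := ciInf_le (Finite.bddBelow_range _) i
    calc (D q) ^ 2 = |D q| ^ 2 := by rw [abs_of_nonneg (hD0 q)]
      _ ≤ |x i - q| ^ 2 := by nlinarith [abs_nonneg (D q), abs_of_nonneg (hD0 q), hD0 q]
      _ = (x i - q) ^ 2 := sq_abs _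
  suffices hKey : 2 * n * (∫ u in (0:ℝ)..a, gg h r u) ≤ ∫ q in (0:ℝ)..1, gg h r (D q) by
    refine hKey.trans (intervalIntegral.integral_mono_on zero_le_one
      (hgDc.intervalIntegrable _ _) (hfc.intervalIntegrable _ _) (fun q _ => hpt q))
  -- move to ENNReal
  have hRHSnn : 0 ≤ ∫ q in (0:ℝ)..1, gg h r (D q) :=
    intervalIntegral.integral_nonneg zero_le_one (fun q _ => gg_nonneg _)
  rw [← ENNReal.ofReal_le_ofReal_iff hRHSnn]
  set μ₁ := volume.restrict (Ioc (0:ℝ) 1) with hμ₁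
  set μ₂ := volume.restrict (Ioc (0:ℝ) a) with hμ₂
  have hI1 : ENNReal.ofReal (∫ q in (0:ℝ)..1, gg h r (D q))
      = ∫⁻ t in Ioi (0:ℝ), μ₁ {q | t < gg h r (D q)} := by
    rw [intervalIntegral.integral_of_le zero_le_one,
      ofReal_integral_eq_lintegral_ofReal (hgDc.integrableOn_Ioc)
        (ae_of_all _ fun q => gg_nonneg _),
      lintegral_eq_lintegral_meas_lt _ (ae_of_all _ fun q => gg_nonneg _)
        (hgDc.measurable.aemeasurable)]
  have hI2 : ENNReal.ofReal (∫ u in (0:ℝ)..a, gg h r u)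
      = ∫⁻ t in Ioi (0:ℝ), μ₂ {u | t < gg h r u} := by
    rw [intervalIntegral.integral_of_le ha0.le,
      ofReal_integral_eq_lintegral_ofReal (hgc.integrableOn_Ioc)
        (ae_of_all _ fun q => gg_nonneg _),
      lintegral_eq_lintegral_meas_lt _ (ae_of_all _ fun q => gg_nonneg _)
        (hgc.measurable.aemeasurable)]
  have hmain : ∫⁻ t in Ioi (0:ℝ), ENNReal.ofReal (2 * n) * μ₂ {u | t < gg h r u}
      ≤ ∫⁻ t in Ioi (0:ℝ), μ₁ {q | t < gg h r (D q)} := by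
    apply lintegral_mono_ae
    rw [ae_restrict_iff' measurableSet_Ioi]
    refine ae_of_all _ (fun t ht => ?_)
    replace ht : (0:ℝ) < t := ht
    by_cases hcase : t < gg h r 0
    · have hset1 : {q : ℝ | t < gg h r (D q)} = univ :=
        eq_univ_of_forall fun q =>
          lt_of_lt_of_le hcase (gg_mono hr.le (by simpa using sq_nonneg (D q)))
      have hset2 : {u : ℝ | t < gg h r u} = univ :=
        eq_univ_of_forall fun u =>
          lt_of_lt_of_le hcase (gg_mono hr.le (by simpa using sq_nonneg u))
      rw [hset1, hset2, hμ₁, hμ₂]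
      simp only [Measure.restrict_apply_univ]
      rw [Real.volume_Ioc, Real.volume_Ioc,
        ← ENNReal.ofReal_mul (by positivity : (0:ℝ) ≤ 2 * n)]
      apply ENNReal.ofReal_le_ofReal
      rw [mul_sub]
      simp [h2na]
    · push_neg at hcase
      set s := Real.sqrt (t ^ (2 / r) - h ^ 2) with hs
      have hs0 : 0 ≤ s := Real.sqrt_nonneg _
      have hiff : ∀ u : ℝ, 0 ≤ u → (t < gg h r u ↔ s < u) :=
        fun u hu => level_iff hr ht.le hcase hu
      have hμ2v : μ₂ {u | t < gg h r u} = ENNReal.ofReal (a - s) := by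
        rw [hμ₂, Measure.restrict_apply' measurableSet_Ioc]
        have hseteq : {u : ℝ | t < gg h r u} ∩ Ioc 0 a = Ioc s a := by
          ext u
          simp only [Set.mem_inter_iff, Set.mem_setOf_eq, Set.mem_Ioc]
          constructor
          · rintro ⟨h1, h2, h3⟩; exact ⟨(hiff u h2.le).mp h1, h3⟩
          · rintro ⟨h1, h2⟩
            have hu0 : 0 < u := lt_of_le_of_lt hs0 h1
            exact ⟨(hiff u hu0.le).mpr h1, hu0, h2⟩
        rw [hseteq, Real.volume_Ioc]
      have hseteq1 : {q : ℝ | t < gg h r (D q)} = {q | s < D q} := by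
        ext q; exact hiff _ (hD0 q)
      have hcover : Ioc (0:ℝ) 1
          ⊆ ({q | s < D q} ∩ Ioc 0 1) ∪ ⋃ i, Icc (x i - s) (x i + s) := by
        intro q hq
        by_cases hsd : s < D q
        · exact Or.inl ⟨hsd, hq⟩
        · push_neg at hsd
          obtain ⟨i, hi⟩ := hDmin q
          refine Or.inr (mem_iUnion.mpr ⟨i, ?_⟩)
          have habs : |x i - q| ≤ s := hi ▸ hsd
          rw [abs_le] at habs
          exact ⟨by linarith [habs.1], by linarith [habs.2]⟩
      have hub : volume (⋃ i, Icc (x i - s) (x i + s)) ≤ ENNReal.ofReal (2 * n * s) := by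
        have hIcc : ∀ i : Fin n, volume (Icc (x i - s) (x i + s)) = ENNReal.ofReal (2 * s) := by
          intro i; rw [Real.volume_Icc]; congr 1; ring
        calc volume (⋃ i, Icc (x i - s) (x i + s))
            ≤ ∑ i : Fin n, volume (Icc (x i - s) (x i + s)) :=
              measure_iUnion_fintype_le _ _
          _ = (n : ENNReal) * ENNReal.ofReal (2 * s) := by
              simp only [hIcc]
              rw [Finset.sum_const, Finset.card_univ, Fintype.card_fin, nsmul_eq_mul]
          _ = ENNReal.ofReal (2 * n * s) := by
              rw [← ENNReal.ofReal_natCast n, ← ENNReal.ofReal_mul (Nat.cast_nonneg n)]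
              congr 1; ring
      have h1le : ENNReal.ofReal 1
          ≤ volume ({q | s < D q} ∩ Ioc 0 1) + ENNReal.ofReal (2 * n * s) := by
        calc ENNReal.ofReal 1 = volume (Ioc (0:ℝ) 1) := by
              rw [Real.volume_Ioc]; norm_num
          _ ≤ volume (({q | s < D q} ∩ Ioc 0 1) ∪ ⋃ i, Icc (x i - s) (x i + s)) :=
              measure_mono hcover
          _ ≤ volume ({q | s < D q} ∩ Ioc 0 1)
              + volume (⋃ i, Icc (x i - s) (x i + s)) := measure_union_le _ _
          _ ≤ _ := add_le_add_right hub _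
      rw [hμ2v, hseteq1, hμ₁, Measure.restrict_apply' measurableSet_Ioc,
        ← ENNReal.ofReal_mul (by positivity : (0:ℝ) ≤ 2 * n)]
      have heq : 2 * (n:ℝ) * (a - s) = 1 - 2 * n * s := by linear_combination h2na
      rw [heq, ENNReal.ofReal_sub _ (by positivity : (0:ℝ) ≤ 2 * n * s),
        tsub_le_iff_right]
      exact h1le
  calc ENNReal.ofReal (2 * n * ∫ u in (0:ℝ)..a, gg h r u)
      = ENNReal.ofReal (2 * n) * ENNReal.ofReal (∫ u in (0:ℝ)..a, gg h r u) :=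
        ENNReal.ofReal_mul (by positivity)
    _ = ENNReal.ofReal (2 * n) * ∫⁻ t in Ioi (0:ℝ), μ₂ {u | t < gg h r u} := by rw [hI2]
    _ = ∫⁻ t in Ioi (0:ℝ), ENNReal.ofReal (2 * n) * μ₂ {u | t < gg h r u} :=
        (lintegral_const_mul' _ _ ENNReal.ofReal_ne_top).symm
    _ ≤ ∫⁻ t in Ioi (0:ℝ), μ₁ {q | t < gg h r (D q)} := hmain
    _ = ENNReal.ofReal (∫ q in (0:ℝ)..1, gg h r (D q)) := hI1.symm
end A

theorem stmt_7 (h r : ℝ) (hh : 0 ≤ h) (hr : 0 < r) (n : ℕ) (hn : 1 ≤ n)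
    (P : (Fin n → ℝ) → ℝ)
    (hP : ∀ x : Fin n → ℝ,
      P x = ∫ q in (0:ℝ)..1, ⨅ i : Fin n, ((x i - q) ^ 2 + h ^ 2) ^ (r / 2))
    (xu : Fin n → ℝ) (hxu : ∀ i : Fin n, xu i = (2 * (i : ℝ) + 1) / (2 * n)) :
    (∀ x : Fin n → ℝ, P xu ≤ P x) ∧
    P xu = 2 * n * ∫ u in (0:ℝ)..(1 / (2 * n)), (u ^ 2 + h ^ 2) ^ (r / 2) := by
  have hb : P xu = 2 * n * ∫ u in (0:ℝ)..(1 / (2 * n)), gg h r u := by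
    rw [hP xu]; exact partB hr hn xu hxu
  constructor
  · intro x
    rw [hP x, hb]
    exact partA hr hn x
  · exact hb
end
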